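/- arXiv:2311.03266 — 2 statements merged into one kernel-verified Lean document; each statement's English description precedes it below -/
import Mathlib

section
/- For any four unit vectors ψ1, ψ2, ψ3, ψ4 in the 2-dimensional complex Hilbert space ℂ², with overlaps r_{ij} = |⟨ψi|ψj⟩|², the inequality r_{12} + r_{13} + r_{14} − r_{23} − r_{24} − r_{34} ≤ 1 holds. -/
/-- For any four unit vectors in ℂ², the overlaps
`r i j = |⟨ψ i, ψ j⟩|²` satisfy
`r 0 1 + r 0 2 + r 0 3 − r 1 2 − r 1 3 − r 2 3 ≤ 1`. -/
theorem stmt_0 (ψ : Fin 4 → EuclideanSpace ℂ (Fin 2))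
    (hψ : ∀ i, ‖ψ i‖ = 1)
    (r : Fin 4 → Fin 4 → ℝ)
    (hr : ∀ i j, r i j = ‖(inner ℂ (ψ i) (ψ j) : ℂ)‖ ^ 2) :
    r 0 1 + r 0 2 + r 0 3 - r 1 2 - r 1 3 - r 2 3 ≤ 1 := by
  have hin : ∀ i j, (inner ℂ (ψ i) (ψ j) : ℂ)
      = (starRingEnd ℂ) (ψ i 0) * ψ j 0 + (starRingEnd ℂ) (ψ i 1) * ψ j 1 := by
    intro i j
    simp [PiLp.inner_apply, RCLike.inner_apply, Fin.sum_univ_two, mul_comm]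
  have hn : ∀ i, ψ i 0 * (starRingEnd ℂ) (ψ i 0) + ψ i 1 * (starRingEnd ℂ) (ψ i 1) = 1 := by
    intro i
    have h1 : (inner ℂ (ψ i) (ψ i) : ℂ) = 1 := by
      rw [inner_self_eq_norm_sq_to_K, hψ i]; norm_num
    rw [hin] at h1
    linear_combination h1
  have hr' : ∀ i j, r i j = Complex.normSq
      ((starRingEnd ℂ) (ψ i 0) * ψ j 0 + (starRingEnd ℂ) (ψ i 1) * ψ j 1) := by
    intro i j
    rw [hr i j, hin i j, Complex.sq_norm]
  have key :
      Complex.normSq (ψ 0 0 * (starRingEnd ℂ) (ψ 0 0) - ψ 1 0 * (starRingEnd ℂ) (ψ 1 0)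
          - ψ 2 0 * (starRingEnd ℂ) (ψ 2 0) - ψ 3 0 * (starRingEnd ℂ) (ψ 3 0) + 1)
      + Complex.normSq (ψ 0 0 * (starRingEnd ℂ) (ψ 0 1) - ψ 1 0 * (starRingEnd ℂ) (ψ 1 1)
          - ψ 2 0 * (starRingEnd ℂ) (ψ 2 1) - ψ 3 0 * (starRingEnd ℂ) (ψ 3 1))
      + Complex.normSq (ψ 0 1 * (starRingEnd ℂ) (ψ 0 0) - ψ 1 1 * (starRingEnd ℂ) (ψ 1 0)
          - ψ 2 1 * (starRingEnd ℂ) (ψ 2 0) - ψ 3 1 * (starRingEnd ℂ) (ψ 3 0))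
      + Complex.normSq (ψ 0 1 * (starRingEnd ℂ) (ψ 0 1) - ψ 1 1 * (starRingEnd ℂ) (ψ 1 1)
          - ψ 2 1 * (starRingEnd ℂ) (ψ 2 1) - ψ 3 1 * (starRingEnd ℂ) (ψ 3 1) + 1)
      = 2 - 2 * (r 0 1 + r 0 2 + r 0 3 - r 1 2 - r 1 3 - r 2 3) := by
    rw [hr' 0 1, hr' 0 2, hr' 0 3, hr' 1 2, hr' 1 3, hr' 2 3]
    apply Complex.ofReal_injective
    push_cast
    simp only [← Complex.mul_conj]
    simp only [map_add, map_sub, map_mul, map_one, Complex.conj_conj]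
    linear_combination
      (ψ 0 0 * (starRingEnd ℂ) (ψ 0 0) + ψ 0 1 * (starRingEnd ℂ) (ψ 0 1) + 3) * hn 0
      + (ψ 1 0 * (starRingEnd ℂ) (ψ 1 0) + ψ 1 1 * (starRingEnd ℂ) (ψ 1 1) - 1) * hn 1
      + (ψ 2 0 * (starRingEnd ℂ) (ψ 2 0) + ψ 2 1 * (starRingEnd ℂ) (ψ 2 1) - 1) * hn 2
      + (ψ 3 0 * (starRingEnd ℂ) (ψ 3 0) + ψ 3 1 * (starRingEnd ℂ) (ψ 3 1) - 1) * hn 3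
  have h1 := Complex.normSq_nonneg (ψ 0 0 * (starRingEnd ℂ) (ψ 0 0) - ψ 1 0 * (starRingEnd ℂ) (ψ 1 0)
          - ψ 2 0 * (starRingEnd ℂ) (ψ 2 0) - ψ 3 0 * (starRingEnd ℂ) (ψ 3 0) + 1)
  have h2 := Complex.normSq_nonneg (ψ 0 0 * (starRingEnd ℂ) (ψ 0 1) - ψ 1 0 * (starRingEnd ℂ) (ψ 1 1)
          - ψ 2 0 * (starRingEnd ℂ) (ψ 2 1) - ψ 3 0 * (starRingEnd ℂ) (ψ 3 1))
  have h3 := Complex.normSq_nonneg (ψ 0 1 * (starRingEnd ℂ) (ψ 0 0) - ψ 1 1 * (starRingEnd ℂ) (ψ 1 0)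
          - ψ 2 1 * (starRingEnd ℂ) (ψ 2 0) - ψ 3 1 * (starRingEnd ℂ) (ψ 3 0))
  have h4 := Complex.normSq_nonneg (ψ 0 1 * (starRingEnd ℂ) (ψ 0 1) - ψ 1 1 * (starRingEnd ℂ) (ψ 1 1)
          - ψ 2 1 * (starRingEnd ℂ) (ψ 2 1) - ψ 3 1 * (starRingEnd ℂ) (ψ 3 1) + 1)
  linarith
end

section
/- For any three unit vectors ψ1, ψ2, ψ3 in a complex Hilbert space with overlaps r_{ij} = |⟨ψi|ψj⟩|², the inequality r_{12} + r_{13} − r_{23} ≤ 5/4 holds, and the bound 5/4 is attained by three suitable qubit states. -/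
open scoped ComplexConjugate

lemma overlap_poly (a b c : ℝ) (ha : 0 ≤ a) (hb : 0 ≤ b) (hc : 0 ≤ c)
    (ha1 : a ≤ 1) (hb1 : b ≤ 1) (hc1 : c ≤ 1)
    (key : (a*b - c)^2 ≤ (1 - a^2) * (1 - b^2)) :
    a^2 + b^2 - c^2 ≤ 5/4 := by
  have h : 0 ≤ 1 - (a^2+b^2) - c^2 + 2*a*b*c := by nlinarith [key]
  rcases lt_or_eq_of_le hc1 with hlt | heq
  · have h1c : 0 < 1 - c := by linarith
    have hprod : 0 ≤ (1-c) * (5/4 + c^2 - (a^2+b^2)) := by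
      have : (1-c) * (5/4 + c^2 - (a^2+b^2))
          = (1 - (a^2+b^2) - c^2 + 2*a*b*c) + c*(a-b)^2 + (1-c)*(c-1/2)^2 := by ring
      rw [this]
      have h2 := mul_nonneg hc (sq_nonneg (a-b))
      have h3 := mul_nonneg h1c.le (sq_nonneg (c-1/2))
      linarith
    nlinarith [hprod, h1c]
  · have hab : a * b ≤ 1 := by nlinarith
    nlinarith [sq_nonneg (a-b), h, heq, hab]

noncomputable def qtrip : Fin 3 → EuclideanSpace ℂ (Fin 2) :=
  ![(WithLp.equiv 2 _).symm ![(1:ℂ), 0],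
    (WithLp.equiv 2 _).symm ![((Real.sqrt 3 / 2 : ℝ) : ℂ), ((1/2 : ℝ) : ℂ)],
    (WithLp.equiv 2 _).symm ![((Real.sqrt 3 / 2 : ℝ) : ℂ), ((-(1/2) : ℝ) : ℂ)]]

lemma qtrip_spec : (∀ i, ‖qtrip i‖ = 1) ∧
    ‖(inner ℂ (qtrip 0) (qtrip 1) : ℂ)‖ ^ 2 + ‖(inner ℂ (qtrip 0) (qtrip 2) : ℂ)‖ ^ 2
      - ‖(inner ℂ (qtrip 1) (qtrip 2) : ℂ)‖ ^ 2 = 5/4 := by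
  have h3 : Real.sqrt 3 ^ 2 = 3 := Real.sq_sqrt (by norm_num)
  have h3' : |Real.sqrt 3| = Real.sqrt 3 := abs_of_nonneg (Real.sqrt_nonneg 3)
  constructor
  · intro i
    fin_cases i <;>
      simp only [qtrip, Matrix.cons_val_zero, Matrix.cons_val_one, Matrix.head_cons,
        Matrix.cons_val_two, Matrix.tail_cons] <;>
      rw [EuclideanSpace.norm_eq] <;>
      simp only [WithLp.equiv_symm_apply, PiLp.toLp_apply, Fin.sum_univ_two, Matrix.cons_val_zero,
        Matrix.cons_val_one, Matrix.head_cons, Complex.norm_real, norm_one,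
        norm_zero, Real.norm_eq_abs] <;>
      rw [Real.sqrt_eq_one] <;>
      simp [abs_div, h3', abs_neg] <;>
      nlinarith [h3]
  · have i01 : (inner ℂ (qtrip 0) (qtrip 1) : ℂ) = ((Real.sqrt 3 / 2 : ℝ) : ℂ) := by
      rw [PiLp.inner_apply]
      simp [qtrip, Fin.sum_univ_two]
    have i02 : (inner ℂ (qtrip 0) (qtrip 2) : ℂ) = ((Real.sqrt 3 / 2 : ℝ) : ℂ) := by
      rw [PiLp.inner_apply]
      simp [qtrip, Fin.sum_univ_two]
    have i12 : (inner ℂ (qtrip 1) (qtrip 2) : ℂ)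
        = ((Real.sqrt 3 / 2 * (Real.sqrt 3 / 2) - 1/2 * (1/2) : ℝ) : ℂ) := by
      rw [PiLp.inner_apply]
      simp [qtrip, Fin.sum_univ_two, Complex.conj_ofReal, map_ofNat]
      ring
    rw [i01, i02, i12]
    simp only [Complex.norm_real, Real.norm_eq_abs]
    rw [abs_div, h3']
    rw [show Real.sqrt 3 / 2 * (Real.sqrt 3 / 2) - 1/2 * (1/2) = 1/2 by nlinarith [h3]]
    norm_num
    linear_combination h3 / 2

/-- For any three unit vectors in ℂ^d with overlaps `r i j = |⟨ψi,ψj⟩|²`,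
`r 0 1 + r 0 2 − r 1 2 ≤ 5/4`, and the bound is attained by suitable qubit
states. -/
theorem stmt_18 {d : ℕ}
    (ψ : Fin 3 → EuclideanSpace ℂ (Fin d))
    (hψ : ∀ i, ‖ψ i‖ = 1)
    (r : Fin 3 → Fin 3 → ℝ)
    (hr : ∀ i j, r i j = ‖(inner ℂ (ψ i) (ψ j) : ℂ)‖ ^ 2) :
    r 0 1 + r 0 2 - r 1 2 ≤ 5/4 ∧
    ∃ φ : Fin 3 → EuclideanSpace ℂ (Fin 2), (∀ i, ‖φ i‖ = 1) ∧
      ‖(inner ℂ (φ 0) (φ 1) : ℂ)‖ ^ 2 + ‖(inner ℂ (φ 0) (φ 2) : ℂ)‖ ^ 2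
        - ‖(inner ℂ (φ 1) (φ 2) : ℂ)‖ ^ 2 = 5/4 := by
  constructor
  · rw [hr 0 1, hr 0 2, hr 1 2]
    set x : ℂ := inner ℂ (ψ 0) (ψ 1) with hxd
    set y : ℂ := inner ℂ (ψ 0) (ψ 2) with hyd
    set z : ℂ := inner ℂ (ψ 1) (ψ 2) with hzd
    have h00 : (inner ℂ (ψ 0) (ψ 0) : ℂ) = 1 := by
      rw [inner_self_eq_norm_sq_to_K, hψ 0]; norm_num
    have h10 : (inner ℂ (ψ 1) (ψ 0) : ℂ) = conj x := by rw [hxd, inner_conj_symm]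
    have h20 : (inner ℂ (ψ 2) (ψ 0) : ℂ) = conj y := by rw [hyd, inner_conj_symm]
    set u : EuclideanSpace ℂ (Fin d) := ψ 1 - x • ψ 0 with hud
    set v : EuclideanSpace ℂ (Fin d) := ψ 2 - y • ψ 0 with hvd
    have hu : ‖u‖^2 = 1 - ‖x‖^2 := by
      have := @norm_sub_sq ℂ _ _ _ _ (ψ 1) (x • ψ 0)
      rw [inner_smul_right, h10] at this
      simp only [hud, this, norm_smul, hψ 0, hψ 1, mul_one, one_pow, mul_pow]
      rw [mul_comm x (conj x), Complex.conj_mul']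
      simp [← Complex.ofReal_pow]
      ring
    have hv : ‖v‖^2 = 1 - ‖y‖^2 := by
      have := @norm_sub_sq ℂ _ _ _ _ (ψ 2) (y • ψ 0)
      rw [inner_smul_right, h20] at this
      simp only [hvd, this, norm_smul, hψ 0, hψ 2, mul_one, one_pow, mul_pow]
      rw [mul_comm y (conj y), Complex.conj_mul']
      simp [← Complex.ofReal_pow]
      ring
    have huv : (inner ℂ u v : ℂ) = z - conj x * y := by
      simp only [hud, hvd, inner_sub_left, inner_sub_right, inner_smul_left,
        inner_smul_right, h00, h10, h20, ← hzd, ← hyd]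
      ring
    have cbs : ‖(inner ℂ u v : ℂ)‖ ≤ ‖u‖ * ‖v‖ := norm_inner_le_norm u v
    have habc : |‖conj x * y‖ - ‖z‖| ≤ ‖(inner ℂ u v : ℂ)‖ := by
      rw [huv]
      calc |‖conj x * y‖ - ‖z‖| ≤ ‖conj x * y - z‖ := abs_norm_sub_norm_le _ _
        _ = ‖z - conj x * y‖ := norm_sub_rev _ _
    have key : (‖x‖ * ‖y‖ - ‖z‖)^2 ≤ (1 - ‖x‖^2) * (1 - ‖y‖^2) := by
      have h1 : ‖conj x * y‖ = ‖x‖ * ‖y‖ := by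
        rw [norm_mul, RCLike.norm_conj]
      have h2 : (‖x‖ * ‖y‖ - ‖z‖)^2 ≤ ‖(inner ℂ u v : ℂ)‖^2 := by
        rw [← h1, ← sq_abs (‖conj x * y‖ - ‖z‖)]
        exact pow_le_pow_left₀ (abs_nonneg _) habc 2
      calc (‖x‖ * ‖y‖ - ‖z‖)^2 ≤ ‖(inner ℂ u v : ℂ)‖^2 := h2
        _ ≤ (‖u‖ * ‖v‖)^2 := pow_le_pow_left₀ (norm_nonneg _) cbs 2
        _ = (1 - ‖x‖^2) * (1 - ‖y‖^2) := by rw [mul_pow, hu, hv]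
    have hx1 : ‖x‖ ≤ 1 := by
      have := norm_inner_le_norm (𝕜 := ℂ) (ψ 0) (ψ 1); rw [hψ 0, hψ 1] at this
      simpa using this
    have hy1 : ‖y‖ ≤ 1 := by
      have := norm_inner_le_norm (𝕜 := ℂ) (ψ 0) (ψ 2); rw [hψ 0, hψ 2] at this
      simpa using this
    have hz1 : ‖z‖ ≤ 1 := by
      have := norm_inner_le_norm (𝕜 := ℂ) (ψ 1) (ψ 2); rw [hψ 1, hψ 2] at this
      simpa using this
    exact overlap_poly _ _ _ (norm_nonneg x) (norm_nonneg y) (norm_nonneg z) hx1 hy1 hz1 key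
  · exact ⟨qtrip, qtrip_spec.1, qtrip_spec.2⟩
end
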